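/- arXiv:1912.00452 — 5 statements merged into one kernel-verified Lean document; each statement's English description precedes it below -/
import Mathlib

section
/- Let n be a power of 2 and let k be a natural number with k < n. Then S_k · S_{n−1−k} = S_{n−1} in R[x]. -/
/-- The Sierpiński polynomial `S m = ∏_{j≥0} (1 + X^(2^j))^(d_j m)` where `d_j m` is the
`j`-th binary digit of `m`. -/
noncomputable def Sier (R : Type*) [CommRing R] (m : ℕ) : Polynomial R :=
  ∏ j ∈ Finset.range (m + 1), if m.testBit j then 1 + Polynomial.X ^ (2 ^ j) else 1

lemma xor_sub_aux (t : ℕ) : ∀ k, k < 2^t → 2^t - 1 - k = (2^t - 1) ^^^ k := by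
  induction t with
  | zero => intro k hk; interval_cases k <;> simp
  | succ t ih =>
    intro k hk
    have h2 : (2:ℕ)^(t+1) = 2 * 2^t := by ring
    have hq : k / 2 < 2 ^ t := by omega
    have ihq := ih (k/2) hq
    have hdiv : ((2^(t+1) - 1) ^^^ k) / 2 = (2^t - 1) ^^^ (k/2) := by
      rw [Nat.xor_div_two, show (2^(t+1)-1)/2 = 2^t-1 by omega]
    have hx1 : (2^(t+1) - 1) % 2 = 1 := by omega
    have hiff := Nat.xor_mod_two_eq_one (a := 2^(t+1) - 1) (b := k)
    have hmod : ((2^(t+1) - 1) ^^^ k) % 2 = 1 - k % 2 := by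
      rcases Nat.mod_two_eq_zero_or_one k with h | h <;>
        rcases Nat.mod_two_eq_zero_or_one ((2^(t+1) - 1) ^^^ k) with h' | h' <;>
        simp [h, h', hx1] at hiff ⊢ <;> omega
    have := Nat.div_add_mod ((2^(t+1) - 1) ^^^ k) 2
    have := Nat.div_add_mod k 2
    omega

lemma Sier_eq_prod (R : Type*) [CommRing R] (m N : ℕ) (h : m < N) :
    Sier R m = ∏ j ∈ Finset.range N,
      if m.testBit j then 1 + Polynomial.X ^ (2 ^ j) else 1 := by
  apply Finset.prod_subset (Finset.range_subset_range.2 (by omega))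
  intro j _ hj
  simp only [Finset.mem_range, not_lt] at hj
  rw [Nat.testBit_eq_false_of_lt (lt_of_lt_of_le (Nat.lt_two_pow_self (n := m))
    (Nat.pow_le_pow_right (by norm_num) (by omega)))]
  simp

/-- If n is a power of 2 and k < n, then S k * S (n-1-k) = S (n-1). -/
theorem sierpinski_complement (R : Type*) [CommRing R] (n k : ℕ)
    (hn : ∃ t : ℕ, n = 2 ^ t) (hk : k < n) :
    Sier R k * Sier R (n - 1 - k) = Sier R (n - 1) := by
  obtain ⟨t, rfl⟩ := hn
  have h1 : 1 ≤ 2^t := Nat.one_le_two_pow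
  rw [Sier_eq_prod R k (2^t) hk, Sier_eq_prod R (2^t-1-k) (2^t) (by omega),
    Sier_eq_prod R (2^t-1) (2^t) (by omega), ← Finset.prod_mul_distrib]
  apply Finset.prod_congr rfl
  intro j _
  rw [xor_sub_aux t k hk]
  by_cases hj : j < t
  · rw [Nat.testBit_xor, Nat.testBit_two_pow_sub_one]
    simp only [hj, decide_true]
    cases hb : k.testBit j <;> simp
  · have hpow : (2:ℕ)^t ≤ 2^j := Nat.pow_le_pow_right (by norm_num) (by omega)
    rw [Nat.testBit_eq_false_of_lt (show k < 2^j by omega),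
      Nat.testBit_eq_false_of_lt (show (2^t-1) ^^^ k < 2^j from
        lt_of_lt_of_le (Nat.xor_lt_two_pow (by omega) hk) hpow),
      Nat.testBit_eq_false_of_lt (show 2^t-1 < 2^j by omega)]
    simp
end

section
/- For every m ∈ ℕ, the polynomial S̄_m = ∏_{j≥0} (1 − x^{2^j})^{d_j(m)} equals the termwise product σ ⊙ S_m; that is, for every i ∈ ℕ, the coefficient of x^i in S̄_m equals σ_i times the coefficient of x^i in S_m, where σ_i = (−1)^{H(i)} and H(i) is the number of 1s in the binary expansion of i. -/
/-- The signed Thue–Morse sequence: `σ n = (-1)^(Hamming weight of n)`. -/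
noncomputable def sgn (R : Type*) [CommRing R] (n : ℕ) : R := (-1) ^ (Nat.digits 2 n).sum

/-- The signed Sierpiński polynomial `S̄ m = ∏_{j≥0} (1 - X^(2^j))^(d_j m)`. -/
noncomputable def SierBar (R : Type*) [CommRing R] (m : ℕ) : Polynomial R :=
  ∏ j ∈ Finset.range (m + 1), if m.testBit j then 1 - Polynomial.X ^ (2 ^ j) else 1

open Polynomial in
open Classical in
lemma aux_testBit_add_two_pow : ∀ (a k j : ℕ), k.testBit a = false →
    (k + 2 ^ a).testBit j = (k.testBit j || decide (j = a)) := by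
  intro a
  induction a with
  | zero =>
    intro k j h
    simp only [pow_zero] at *
    have hk : k % 2 = 0 := by
      simpa [Nat.testBit_zero] using h
    cases j with
    | zero => simp [Nat.testBit_zero]; omega
    | succ j =>
      have : (k + 1) / 2 = k / 2 := by omega
      simp [Nat.testBit_add_one, this]
  | succ a ih =>
    intro k j h
    have h2 : (k / 2).testBit a = false := by
      simpa [Nat.testBit_add_one] using h
    have hpow : (2 : ℕ) ^ (a + 1) = 2 * 2 ^ a := by ring
    cases j with
    | zero =>
      have : (k + 2 ^ (a + 1)) % 2 = k % 2 := by
        rw [hpow]; omega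
      simp [Nat.testBit_zero, this]
    | succ j =>
      have hdiv : (k + 2 ^ (a + 1)) / 2 = k / 2 + 2 ^ a := by
        rw [hpow]; omega
      rw [Nat.testBit_add_one, hdiv, ih (k / 2) j h2, Nat.testBit_add_one]
      simp

lemma aux_sum_digits_rec (k : ℕ) :
    (Nat.digits 2 k).sum = k % 2 + (Nat.digits 2 (k / 2)).sum := by
  rcases Nat.eq_zero_or_pos k with h | h
  · simp [h]
  · rw [Nat.digits_def' (by norm_num) h]; simp

lemma aux_sum_digits_add_two_pow : ∀ (a k : ℕ), k.testBit a = false →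
    (Nat.digits 2 (k + 2 ^ a)).sum = (Nat.digits 2 k).sum + 1 := by
  intro a
  induction a with
  | zero =>
    intro k h
    have hk : k % 2 = 0 := by simpa [Nat.testBit_zero] using h
    rw [pow_zero, aux_sum_digits_rec (k + 1), aux_sum_digits_rec k]
    have h1 : (k + 1) % 2 = 1 := by omega
    have h2 : (k + 1) / 2 = k / 2 := by omega
    simp [pow_zero, h1, h2, hk]
    omega
  | succ a ih =>
    intro k h
    have h2 : (k / 2).testBit a = false := by
      simpa [Nat.testBit_add_one] using h
    have hpow : (2 : ℕ) ^ (a + 1) = 2 * 2 ^ a := by ring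
    rw [aux_sum_digits_rec (k + 2 ^ (a + 1)), aux_sum_digits_rec k]
    have hmod : (k + 2 ^ (a + 1)) % 2 = k % 2 := by rw [hpow]; omega
    have hdiv : (k + 2 ^ (a + 1)) / 2 = k / 2 + 2 ^ a := by rw [hpow]; omega
    rw [hmod, hdiv, ih (k / 2) h2]
    omega

lemma aux_sgn_add_two_pow {a k : ℕ} (h : k.testBit a = false) :
    sgn ℤ (k + 2 ^ a) = - sgn ℤ k := by
  unfold sgn
  rw [aux_sum_digits_add_two_pow a k h, pow_succ]
  ring

open Polynomial in
open Classical in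
lemma aux_key (S : Finset ℕ) : ∀ i : ℕ,
    ((∏ j ∈ S, (1 + (X : ℤ[X]) ^ (2 ^ j))).coeff i
      = if ∀ j, i.testBit j = true → j ∈ S then 1 else 0) ∧
    ((∏ j ∈ S, (1 - (X : ℤ[X]) ^ (2 ^ j))).coeff i
      = if ∀ j, i.testBit j = true → j ∈ S then sgn ℤ i else 0) := by
  induction S using Finset.induction_on with
  | empty =>
    intro i
    rcases Nat.eq_zero_or_pos i with hi | hi
    · subst hi
      simp [sgn]
    · have : ∃ j, i.testBit j = true := Nat.exists_testBit_of_ne_zero (by omega)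
      obtain ⟨j, hj⟩ := this
      have hc : ¬ (∀ j, i.testBit j = true → j ∈ (∅ : Finset ℕ)) := by
        intro h; exact absurd (h j hj) (by simp)
      have hne : i ≠ 0 := by omega
      rw [Finset.prod_empty, Finset.prod_empty, Polynomial.coeff_one, if_neg hne,
        if_neg hc, if_neg hc]
      exact ⟨rfl, rfl⟩
  | @insert a S ha ih =>
    intro i
    rw [Finset.prod_insert ha, Finset.prod_insert ha, mul_comm, mul_comm (1 - _)]
    rw [mul_add, mul_one, mul_sub, mul_one]
    rw [Polynomial.coeff_add, Polynomial.coeff_sub,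
      Polynomial.coeff_mul_X_pow', Polynomial.coeff_mul_X_pow']
    by_cases hb : i.testBit a = true
    · have h2a : 2 ^ a ≤ i := Nat.ge_two_pow_of_testBit hb
      set k := i - 2 ^ a with hkdef
      have hk : k + 2 ^ a = i := Nat.sub_add_cancel h2a
      have hka : k.testBit a = false := by
        by_contra hc
        rw [Bool.not_eq_false] at hc
        have h1 : k / 2 ^ a % 2 = 1 := by
          have h' := Nat.testBit_eq_decide_div_mod_eq (x := k) (i := a)
          rw [hc] at h'
          exact of_decide_eq_true h'.symm
        have h2 : i / 2 ^ a % 2 = 1 := by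
          have h' := Nat.testBit_eq_decide_div_mod_eq (x := i) (i := a)
          rw [hb] at h'
          exact of_decide_eq_true h'.symm
        have hd : i / 2 ^ a = k / 2 ^ a + 1 := by
          rw [← hk]; exact Nat.add_div_right k (Nat.two_pow_pos a)
        omega
      have hbits : ∀ j, i.testBit j = (k.testBit j || decide (j = a)) := by
        intro j; rw [← hk]; exact aux_testBit_add_two_pow a k j hka
      -- coefficient of P at i is 0
      have hcondP : ¬ (∀ j, i.testBit j = true → j ∈ S) := by
        intro h; exact ha (h a hb)
      have hcond : (∀ j, i.testBit j = true → j ∈ insert a S)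
          ↔ (∀ j, k.testBit j = true → j ∈ S) := by
        constructor
        · intro h j hj
          have hja : j ≠ a := by
            intro he; rw [he] at hj; rw [hka] at hj; exact absurd hj (by simp)
          have : i.testBit j = true := by rw [hbits j, hj]; simp
          rcases Finset.mem_insert.mp (h j this) with h' | h'
          · exact absurd h' hja
          · exact h'
        · intro h j hj
          rw [hbits j] at hj
          rcases Bool.or_eq_true_iff.mp hj with h' | h'
          · exact Finset.mem_insert_of_mem (h j h')
          · exact Finset.mem_insert.mpr (Or.inl (by simpa using h'))
      obtain ⟨ihP, ihQ⟩ := ih i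
      obtain ⟨ihPk, ihQk⟩ := ih k
      rw [ihP, ihQ, if_neg hcondP, if_neg hcondP, if_pos h2a, if_pos h2a, ihPk, ihQk]
      have hsgn : sgn ℤ i = - sgn ℤ k := by rw [← hk]; exact aux_sgn_add_two_pow hka
      constructor
      · rw [if_congr hcond rfl rfl, zero_add]
      · rw [if_congr hcond rfl rfl]
        by_cases hc : ∀ j, k.testBit j = true → j ∈ S
        · rw [if_pos hc, if_pos hc, hsgn]; ring
        · rw [if_neg hc, if_neg hc]; ring
    · rw [Bool.not_eq_true] at hb
      have hcond : (∀ j, i.testBit j = true → j ∈ insert a S)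
          ↔ (∀ j, i.testBit j = true → j ∈ S) := by
        constructor
        · intro h j hj
          rcases Finset.mem_insert.mp (h j hj) with h' | h'
          · rw [h'] at hj; rw [hj] at hb; exact absurd hb (by simp)
          · exact h'
        · intro h j hj; exact Finset.mem_insert_of_mem (h j hj)
      have hcK : 2 ^ a ≤ i → ¬ (∀ j, (i - 2 ^ a).testBit j = true → j ∈ S) := by
        intro hle h
        have hka : (i - 2 ^ a).testBit a = false := by
          by_contra hc'
          rw [Bool.not_eq_false] at hc'
          exact ha (h a hc')
        have := aux_testBit_add_two_pow a (i - 2 ^ a) a hka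
        rw [Nat.sub_add_cancel hle] at this
        simp [hb] at this
      obtain ⟨ihP, ihQ⟩ := ih i
      obtain ⟨ihPk, ihQk⟩ := ih (i - 2 ^ a)
      constructor
      · rw [ihP, if_congr hcond rfl rfl]
        by_cases hle : 2 ^ a ≤ i
        · rw [if_pos hle, ihPk, if_neg (hcK hle), add_zero]
        · rw [if_neg hle, add_zero]
      · rw [ihQ, if_congr hcond rfl rfl]
        by_cases hle : 2 ^ a ≤ i
        · rw [if_pos hle, ihQk, if_neg (hcK hle), sub_zero]
        · rw [if_neg hle, sub_zero]

open Polynomial in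
/-- The signed Sierpiński polynomial is the termwise product of the signed
Thue–Morse sequence with the Sierpiński polynomial: for all i, the coefficient of x^i in
SierBar m equals σ i times the coefficient of x^i in Sier m, where σ i = (-1)^(H i). -/
theorem sierbar_eq_thueMorse_smul_sier (m : ℕ) :
    ∀ i : ℕ, (SierBar ℤ m).coeff i = sgn ℤ i * (Sier ℤ m).coeff i := by
  classical
  intro i
  have hS : Sier ℤ m = ∏ j ∈ (Finset.range (m + 1)).filter (fun j => m.testBit j),
      (1 + (X : ℤ[X]) ^ (2 ^ j)) := by
    rw [Finset.prod_filter]; rfl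
  have hSb : SierBar ℤ m = ∏ j ∈ (Finset.range (m + 1)).filter (fun j => m.testBit j),
      (1 - (X : ℤ[X]) ^ (2 ^ j)) := by
    rw [Finset.prod_filter]; rfl
  obtain ⟨hP, hQ⟩ := aux_key ((Finset.range (m + 1)).filter (fun j => m.testBit j)) i
  rw [hS, hSb, hP, hQ]
  by_cases hc : ∀ j, i.testBit j = true →
      j ∈ (Finset.range (m + 1)).filter (fun j => m.testBit j)
  · rw [if_pos hc, if_pos hc, mul_one]
  · rw [if_neg hc, if_neg hc, mul_zero]
end

section
/- Let n be a power of 2, let k < n, and let f ∈ R[x] be a polynomial over a commutative ring R. Then (S_{n−1−k}·x^k) ⊙ (S̄_k·f) = σ ⊙ ((S_{n−1−k}·x^k) ⊙ (S_k·f̄)), where f̄ = σ ⊙ f; that is, the two sides have the same coefficient of x^m for every m. -/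
/-- Termwise (Hadamard) product of polynomials. -/
noncomputable def hadP {R : Type*} [CommRing R] (p q : Polynomial R) : Polynomial R :=
  ∑ n ∈ p.support, Polynomial.C (p.coeff n * q.coeff n) * Polynomial.X ^ n

/-- `σ ⊙ p`: termwise product of a polynomial with the signed Thue–Morse sequence. -/
noncomputable def barP {R : Type*} [CommRing R] (p : Polynomial R) : Polynomial R :=
  ∑ n ∈ p.support, Polynomial.C (sgn R n * p.coeff n) * Polynomial.X ^ n


section Aux
open Polynomial
open scoped Classical


/-- Hamming weight. -/
def Hw (n : ℕ) : ℕ := (Nat.digits 2 n).sum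

lemma Hw_zero : Hw 0 = 0 := by simp [Hw]

lemma Hw_rec (n : ℕ) (hn : 0 < n) : Hw n = n % 2 + Hw (n / 2) := by
  unfold Hw
  rw [Nat.digits_def' (by norm_num) hn, List.sum_cons]

lemma Hw_two_mul (n : ℕ) : Hw (2 * n) = Hw n := by
  rcases Nat.eq_zero_or_pos n with h | h
  · simp [h, Hw_zero]
  · rw [Hw_rec (2*n) (by omega)]
    simp [Nat.mul_div_cancel_left, Nat.mul_mod_right]

lemma Hw_two_mul_add_one (n : ℕ) : Hw (2 * n + 1) = Hw n + 1 := by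
  rw [Hw_rec (2*n+1) (by omega)]
  have h1 : (2 * n + 1) % 2 = 1 := by omega
  have h2 : (2 * n + 1) / 2 = n := by omega
  rw [h1, h2]; ring

/-- submask relation on bits -/
def BSub (a b : ℕ) : Prop := ∀ j, a.testBit j = true → b.testBit j = true

/-- bit-disjointness -/
def Dis (a b : ℕ) : Prop := ∀ j, ¬ (a.testBit j = true ∧ b.testBit j = true)

lemma testBit_zero_iff (n : ℕ) : n.testBit 0 = true ↔ n % 2 = 1 := by
  rw [Nat.testBit_zero]; simp

lemma sub_rec (a b : ℕ) : BSub a b ↔ (a % 2 ≤ b % 2) ∧ BSub (a / 2) (b / 2) := by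
  constructor
  · intro h
    refine ⟨?_, fun j hj => ?_⟩
    · have := h 0
      rw [testBit_zero_iff, testBit_zero_iff] at this
      omega
    · have := h (j + 1)
      rw [Nat.testBit_succ, Nat.testBit_succ] at this
      exact this hj
  · rintro ⟨h0, h1⟩ j hj
    cases j with
    | zero =>
      rw [testBit_zero_iff] at hj ⊢; omega
    | succ j =>
      rw [Nat.testBit_succ] at hj ⊢
      exact h1 j hj

lemma dis_rec (a b : ℕ) : Dis a b ↔ (a % 2 = 0 ∨ b % 2 = 0) ∧ Dis (a / 2) (b / 2) := by
  constructor
  · intro h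
    refine ⟨?_, fun j hj => h (j+1) (by rwa [Nat.testBit_succ, Nat.testBit_succ])⟩
    have := h 0
    rw [testBit_zero_iff, testBit_zero_iff] at this
    omega
  · rintro ⟨h0, h1⟩ j hj
    cases j with
    | zero =>
      rw [testBit_zero_iff, testBit_zero_iff] at hj; omega
    | succ j =>
      rw [Nat.testBit_succ, Nat.testBit_succ] at hj
      exact h1 j hj

lemma sub_zero_iff (a : ℕ) : BSub a 0 ↔ a = 0 := by
  constructor
  · intro h
    refine Nat.eq_of_testBit_eq fun i => ?_
    rw [Nat.zero_testBit]
    by_contra hc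
    have : a.testBit i = true := by simpa using hc
    have := h i this
    simp [Nat.zero_testBit] at this
  · rintro rfl j hj; exact hj

lemma bsub_zero_left (b : ℕ) : BSub 0 b := fun j hj => by simp [Nat.zero_testBit] at hj

lemma Hw_add_of_dis : ∀ a b : ℕ, Dis a b → Hw (a + b) = Hw a + Hw b := by
  intro a
  induction a using Nat.strong_induction_on with
  | _ a ih =>
    intro b hd
    rcases Nat.eq_zero_or_pos a with rfl | ha
    · simp [Hw_zero]
    rw [dis_rec] at hd
    obtain ⟨h0, h1⟩ := hd
    have ha2 : a / 2 < a := Nat.div_lt_self ha (by norm_num)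
    have key := ih (a / 2) ha2 (b / 2) h1
    have hab : a + b = 2 * (a / 2 + b / 2) + (a % 2 + b % 2) := by omega
    have hr : a % 2 + b % 2 = 0 ∨ a % 2 + b % 2 = 1 := by omega
    rcases hr with hr | hr
    · rw [hab, hr, Nat.add_zero, Hw_two_mul, key,
        Hw_rec a ha]
      rcases Nat.eq_zero_or_pos b with rfl | hb
      · simp [Hw_zero]; omega
      · rw [Hw_rec b hb]; omega
    · rw [hab, hr, Hw_two_mul_add_one, key, Hw_rec a ha]
      rcases Nat.eq_zero_or_pos b with rfl | hb
      · simp [Hw_zero]; omega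
      · rw [Hw_rec b hb]; omega

lemma sub_le {a k : ℕ} (h : BSub a k) : a ≤ k := by
  induction k using Nat.strong_induction_on generalizing a with
  | _ k ih =>
    rcases Nat.eq_zero_or_pos k with rfl | hk
    · rw [sub_zero_iff] at h; omega
    rw [sub_rec] at h
    have := ih (k / 2) (Nat.div_lt_self hk (by norm_num)) h.2
    omega

lemma sub_decomp {a k : ℕ} (h : BSub a k) : BSub (k - a) k ∧ Dis a (k - a) := by
  induction k using Nat.strong_induction_on generalizing a with
  | _ k ih =>
    rcases Nat.eq_zero_or_pos k with rfl | hk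
    · rw [sub_zero_iff] at h
      subst h
      exact ⟨bsub_zero_left 0, fun j hj => by simp [Nat.zero_testBit] at hj⟩
    have h' := h
    rw [sub_rec] at h'
    obtain ⟨h0, h1⟩ := h'
    have hle : a / 2 ≤ k / 2 := sub_le h1
    obtain ⟨ihs, ihd⟩ := ih (k / 2) (Nat.div_lt_self hk (by norm_num)) h1
    have hka : k - a = 2 * (k / 2 - a / 2) + (k % 2 - a % 2) := by omega
    have hmod : (k - a) % 2 = k % 2 - a % 2 := by omega
    have hdiv : (k - a) / 2 = k / 2 - a / 2 := by omega
    constructor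
    · rw [sub_rec, hmod, hdiv]
      exact ⟨by omega, ihs⟩
    · rw [dis_rec, hmod, hdiv]
      exact ⟨by omega, ihd⟩

lemma dis_pow (t : ℕ) : ∀ k, k < 2 ^ t → Dis k (2 ^ t - 1 - k) := by
  induction t with
  | zero =>
    intro k hk
    interval_cases k
    intro j hj; simp [Nat.zero_testBit] at hj
  | succ t ih =>
    intro k hk
    have hk2 : k / 2 < 2 ^ t := by
      have : 2 ^ (t+1) = 2 * 2 ^ t := by ring
      omega
    have := ih (k / 2) hk2
    rw [dis_rec]
    have e1 : (2 ^ (t+1) - 1 - k) % 2 = 1 - k % 2 := by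
      have : 2 ^ (t+1) = 2 * 2 ^ t := by ring
      omega
    have e2 : (2 ^ (t+1) - 1 - k) / 2 = 2 ^ t - 1 - k / 2 := by
      have : 2 ^ (t+1) = 2 * 2 ^ t := by ring
      omega
    rw [e1, e2]
    exact ⟨by omega, this⟩

lemma dis_of_sub_left {a b c : ℕ} (h : BSub a b) (hd : Dis b c) : Dis a c :=
  fun j hj => hd j ⟨h j hj.1, hj.2⟩

lemma dis_of_sub_right {a b c : ℕ} (h : BSub a b) (hd : Dis c b) : Dis c a :=
  fun j hj => hd j ⟨hj.1, h j hj.2⟩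





variable (R : Type*) [CommRing R]

lemma testBit_false_of_le {m j : ℕ} (h : m ≤ j) : m.testBit j = false := by
  apply Nat.testBit_lt_two_pow
  calc m ≤ j := h
    _ < 2 ^ j := Nat.lt_two_pow_self

lemma sier_eq_prodN (m N : ℕ) (h : m + 1 ≤ N) :
    Sier R m = ∏ j ∈ Finset.range N, if m.testBit j then 1 + Polynomial.X ^ (2 ^ j) else 1 := by
  unfold Sier
  apply Finset.prod_subset
  · intro x hx
    simp only [Finset.mem_range] at hx ⊢; omega
  · intro x hx hx'
    simp only [Finset.mem_range] at hx hx'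
    rw [testBit_false_of_le (by omega)]
    simp

lemma sierBar_eq_prodN (m N : ℕ) (h : m + 1 ≤ N) :
    SierBar R m = ∏ j ∈ Finset.range N, if m.testBit j then 1 - Polynomial.X ^ (2 ^ j) else 1 := by
  unfold SierBar
  apply Finset.prod_subset
  · intro x hx
    simp only [Finset.mem_range] at hx ⊢; omega
  · intro x hx hx'
    simp only [Finset.mem_range] at hx hx'
    rw [testBit_false_of_le (by omega)]
    simp

lemma expand_two_prodN (m N : ℕ) :
    (Polynomial.expand R 2) (∏ j ∈ Finset.range N, if m.testBit j then 1 + Polynomial.X ^ (2 ^ j) else (1 : Polynomial R))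
    = ∏ j ∈ Finset.range N, if m.testBit j then 1 + Polynomial.X ^ (2 ^ (j + 1)) else 1 := by
  rw [map_prod]
  apply Finset.prod_congr rfl
  intro j _
  by_cases h : m.testBit j <;> simp [h, map_pow, Polynomial.expand_X, pow_succ, pow_mul, mul_pow]

lemma expand_two_prodN' (m N : ℕ) :
    (Polynomial.expand R 2) (∏ j ∈ Finset.range N, if m.testBit j then 1 - Polynomial.X ^ (2 ^ j) else (1 : Polynomial R))
    = ∏ j ∈ Finset.range N, if m.testBit j then 1 - Polynomial.X ^ (2 ^ (j + 1)) else 1 := by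
  rw [map_prod]
  apply Finset.prod_congr rfl
  intro j _
  by_cases h : m.testBit j <;> simp [h, map_pow, Polynomial.expand_X, pow_succ, pow_mul, mul_pow]

lemma sier_two_mul (m : ℕ) : Sier R (2 * m) = Polynomial.expand R 2 (Sier R m) := by
  rcases Nat.eq_zero_or_pos m with rfl | hm
  · simp only [Nat.mul_zero]
    rw [show Sier R 0 = 1 by simp [Sier, Nat.zero_testBit], map_one]
  rw [sier_eq_prodN R (2*m) (2*m+1) (by omega), Finset.prod_range_succ',
    sier_eq_prodN R m (2*m) (by omega), expand_two_prodN]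
  have h0 : ¬ ((2*m).testBit 0 = true) := by
    rw [Nat.testBit_zero]; simp
  rw [if_neg h0, mul_one]
  apply Finset.prod_congr rfl
  intro j _
  rw [show (2*m).testBit (j+1) = m.testBit j from by
    rw [Nat.testBit_succ]; congr 1; omega]

lemma sierBar_two_mul (m : ℕ) : SierBar R (2 * m) = Polynomial.expand R 2 (SierBar R m) := by
  rcases Nat.eq_zero_or_pos m with rfl | hm
  · simp only [Nat.mul_zero]
    rw [show SierBar R 0 = 1 by simp [SierBar, Nat.zero_testBit], map_one]
  rw [sierBar_eq_prodN R (2*m) (2*m+1) (by omega), Finset.prod_range_succ',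
    sierBar_eq_prodN R m (2*m) (by omega), expand_two_prodN']
  have h0 : ¬ ((2*m).testBit 0 = true) := by
    rw [Nat.testBit_zero]; simp
  rw [if_neg h0, mul_one]
  apply Finset.prod_congr rfl
  intro j _
  rw [show (2*m).testBit (j+1) = m.testBit j from by
    rw [Nat.testBit_succ]; congr 1; omega]

lemma sier_two_mul_add_one (m : ℕ) :
    Sier R (2 * m + 1) = (1 + Polynomial.X) * Polynomial.expand R 2 (Sier R m) := by
  rw [sier_eq_prodN R (2*m+1) (2*m+2) (by omega), Finset.prod_range_succ',
    sier_eq_prodN R m (2*m+1) (by omega), expand_two_prodN]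
  have h0 : (2*m+1).testBit 0 = true := by
    rw [Nat.testBit_zero]; simp
  rw [if_pos h0, pow_zero, pow_one, mul_comm]
  congr 1
  apply Finset.prod_congr rfl
  intro j _
  rw [show (2*m+1).testBit (j+1) = m.testBit j from by
    rw [Nat.testBit_succ]; congr 1; omega]

lemma sierBar_two_mul_add_one (m : ℕ) :
    SierBar R (2 * m + 1) = (1 - Polynomial.X) * Polynomial.expand R 2 (SierBar R m) := by
  rw [sierBar_eq_prodN R (2*m+1) (2*m+2) (by omega), Finset.prod_range_succ',
    sierBar_eq_prodN R m (2*m+1) (by omega), expand_two_prodN']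
  have h0 : (2*m+1).testBit 0 = true := by
    rw [Nat.testBit_zero]; simp
  rw [if_pos h0, pow_zero, pow_one, mul_comm]
  congr 1
  apply Finset.prod_congr rfl
  intro j _
  rw [show (2*m+1).testBit (j+1) = m.testBit j from by
    rw [Nat.testBit_succ]; congr 1; omega]

lemma sier_zero (R : Type*) [CommRing R] : Sier R 0 = 1 := by simp [Sier, Nat.zero_testBit]
lemma sierBar_zero (R : Type*) [CommRing R] : SierBar R 0 = 1 := by simp [SierBar, Nat.zero_testBit]




lemma sier_coeff (m i : ℕ) : (Sier R m).coeff i = if BSub i m then 1 else 0 := by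
  induction m using Nat.strong_induction_on generalizing i with
  | _ m ih =>
    rcases Nat.eq_zero_or_pos m with rfl | hm
    · rw [sier_zero, Polynomial.coeff_one]
      by_cases hi : i = 0 <;> simp [hi, sub_zero_iff]
    have hm2 : m / 2 < m := Nat.div_lt_self hm (by norm_num)
    have hg : ∀ j, ((Polynomial.expand R 2) (Sier R (m / 2))).coeff j
        = if 2 ∣ j then (if BSub (j / 2) (m / 2) then (1 : R) else 0) else 0 := by
      intro j
      rw [Polynomial.coeff_expand (by norm_num)]
      by_cases h : 2 ∣ j <;> simp [h, ih (m / 2) hm2]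
    by_cases hpar : m % 2 = 0
    · have hme : m = 2 * (m / 2) := by omega
      have hcond : BSub i m ↔ (i % 2 = 0 ∧ BSub (i / 2) (m / 2)) := by
        rw [sub_rec]
        constructor <;> rintro ⟨h1, h2⟩ <;> exact ⟨by omega, h2⟩
      rw [show Sier R m = Polynomial.expand R 2 (Sier R (m/2)) from by
        conv_lhs => rw [hme]
        exact sier_two_mul R (m/2)]
      rw [hg i, ]
      by_cases h2 : 2 ∣ i
      · rw [if_pos h2]
        by_cases hb : BSub (i/2) (m/2)
        · rw [if_pos hb, if_pos (hcond.mpr ⟨by omega, hb⟩)]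
        · rw [if_neg hb, if_neg (fun hc => hb (hcond.mp hc).2)]
      · rw [if_neg h2, if_neg (fun hc => h2 (by have h := (hcond.mp hc).1; omega))]
    · have hmo : m = 2 * (m / 2) + 1 := by omega
      have hcond : BSub i m ↔ BSub (i / 2) (m / 2) := by
        rw [sub_rec]
        constructor
        · rintro ⟨h1, h2⟩; exact h2
        · intro h; exact ⟨by omega, h⟩
      rw [show Sier R m = (1 + Polynomial.X) * Polynomial.expand R 2 (Sier R (m/2)) from by
        conv_lhs => rw [hmo]
        exact sier_two_mul_add_one R (m/2)]
      rw [add_mul, one_mul, Polynomial.coeff_add,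
        show (Polynomial.X : Polynomial R) * (Polynomial.expand R 2) (Sier R (m/2))
          = (Polynomial.expand R 2) (Sier R (m/2)) * Polynomial.X ^ 1 from by ring,
        Polynomial.coeff_mul_X_pow', hg i]
      simp only [hcond]
      by_cases hpar2 : i % 2 = 0
      · rw [if_pos (by omega : 2 ∣ i)]
        rcases Nat.eq_zero_or_pos i with rfl | hi
        · rw [if_neg (by omega : ¬ (1:ℕ) ≤ 0), add_zero]
        · rw [if_pos (by omega : 1 ≤ i), hg (i-1), if_neg (by omega : ¬ 2 ∣ (i-1)), add_zero]
      · rw [if_neg (by omega : ¬ 2 ∣ i), if_pos (by omega : 1 ≤ i), hg (i-1),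
          if_pos (by omega : 2 ∣ (i-1)), show (i-1)/2 = i/2 from by omega, zero_add]

lemma sierBar_coeff (m i : ℕ) :
    (SierBar R m).coeff i = if BSub i m then (-1 : R) ^ Hw i else 0 := by
  induction m using Nat.strong_induction_on generalizing i with
  | _ m ih =>
    rcases Nat.eq_zero_or_pos m with rfl | hm
    · rw [sierBar_zero, Polynomial.coeff_one]
      by_cases hi : i = 0 <;> simp [hi, sub_zero_iff, Hw_zero]
    have hm2 : m / 2 < m := Nat.div_lt_self hm (by norm_num)
    have hg : ∀ j, ((Polynomial.expand R 2) (SierBar R (m / 2))).coeff j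
        = if 2 ∣ j then (if BSub (j / 2) (m / 2) then (-1 : R) ^ Hw (j / 2) else 0) else 0 := by
      intro j
      rw [Polynomial.coeff_expand (by norm_num)]
      by_cases h : 2 ∣ j <;> simp [h, ih (m / 2) hm2]
    have hwe : ∀ j : ℕ, j % 2 = 0 → (-1 : R) ^ Hw j = (-1 : R) ^ Hw (j / 2) := by
      intro j hj
      conv_lhs => rw [show j = 2 * (j / 2) from by omega, Hw_two_mul]
    have hwo : ∀ j : ℕ, j % 2 = 1 → (-1 : R) ^ Hw j = -((-1 : R) ^ Hw (j / 2)) := by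
      intro j hj
      conv_lhs => rw [show j = 2 * (j / 2) + 1 from by omega, Hw_two_mul_add_one]
      rw [pow_succ]
      ring
    by_cases hpar : m % 2 = 0
    · have hme : m = 2 * (m / 2) := by omega
      have hcond : BSub i m ↔ (i % 2 = 0 ∧ BSub (i / 2) (m / 2)) := by
        rw [sub_rec]
        constructor <;> rintro ⟨h1, h2⟩ <;> exact ⟨by omega, h2⟩
      rw [show SierBar R m = Polynomial.expand R 2 (SierBar R (m/2)) from by
        conv_lhs => rw [hme]
        exact sierBar_two_mul R (m/2)]
      rw [hg i]
      by_cases h2 : 2 ∣ i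
      · rw [if_pos h2]
        by_cases hb : BSub (i/2) (m/2)
        · rw [if_pos hb, if_pos (hcond.mpr ⟨by omega, hb⟩), hwe i (by omega)]
        · rw [if_neg hb, if_neg (fun hc => hb (hcond.mp hc).2)]
      · rw [if_neg h2, if_neg (fun hc => h2 (by have h := (hcond.mp hc).1; omega))]
    · have hmo : m = 2 * (m / 2) + 1 := by omega
      have hcond : BSub i m ↔ BSub (i / 2) (m / 2) := by
        rw [sub_rec]
        constructor
        · rintro ⟨h1, h2⟩; exact h2
        · intro h; exact ⟨by omega, h⟩
      rw [show SierBar R m = (1 - Polynomial.X) * Polynomial.expand R 2 (SierBar R (m/2)) from by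
        conv_lhs => rw [hmo]
        exact sierBar_two_mul_add_one R (m/2)]
      rw [sub_mul, one_mul, Polynomial.coeff_sub,
        show (Polynomial.X : Polynomial R) * (Polynomial.expand R 2) (SierBar R (m/2))
          = (Polynomial.expand R 2) (SierBar R (m/2)) * Polynomial.X ^ 1 from by ring,
        Polynomial.coeff_mul_X_pow', hg i]
      simp only [hcond]
      by_cases hpar2 : i % 2 = 0
      · rw [if_pos (by omega : 2 ∣ i), hwe i hpar2]
        rcases Nat.eq_zero_or_pos i with rfl | hi
        · rw [if_neg (by omega : ¬ (1:ℕ) ≤ 0), sub_zero]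
        · rw [if_pos (by omega : 1 ≤ i), hg (i-1), if_neg (by omega : ¬ 2 ∣ (i-1)), sub_zero]
      · rw [if_neg (by omega : ¬ 2 ∣ i), if_pos (by omega : 1 ≤ i), hg (i-1),
          if_pos (by omega : 2 ∣ (i-1)), show (i-1)/2 = i/2 from by omega, zero_sub,
          hwo i (by omega)]
        by_cases hb : BSub (i/2) (m/2)
        · rw [if_pos hb, if_pos hb]
        · rw [if_neg hb, if_neg hb, neg_zero]


lemma dis_symm {a b : ℕ} (h : Dis a b) : Dis b a := fun j hj => h j ⟨hj.2, hj.1⟩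

lemma hadP_coeff (p q : Polynomial R) (n : ℕ) :
    (hadP p q).coeff n = p.coeff n * q.coeff n := by
  unfold hadP
  rw [Polynomial.finset_sum_coeff]
  simp only [Polynomial.coeff_C_mul, Polynomial.coeff_X_pow, mul_ite, mul_one, mul_zero]
  rw [Finset.sum_ite_eq]
  by_cases h : n ∈ p.support
  · rw [if_pos h]
  · rw [if_neg h, Polynomial.notMem_support_iff.mp h, zero_mul]

lemma barP_coeff (p : Polynomial R) (n : ℕ) :
    (barP p).coeff n = sgn R n * p.coeff n := by
  unfold barP
  rw [Polynomial.finset_sum_coeff]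
  simp only [Polynomial.coeff_C_mul, Polynomial.coeff_X_pow, mul_ite, mul_one, mul_zero]
  rw [Finset.sum_ite_eq]
  by_cases h : n ∈ p.support
  · rw [if_pos h]
  · rw [if_neg h, Polynomial.notMem_support_iff.mp h, mul_zero]

lemma sgn_eq_hw (n : ℕ) : sgn R n = (-1 : R) ^ Hw n := rfl

lemma key_sign (t k m a b : ℕ) (hk : k < 2 ^ t) (hmk : k ≤ m)
    (hsubd : BSub (m - k) (2 ^ t - 1 - k)) (hsa : BSub a k) (hab : a + b = m) :
    sgn R a = sgn R m * sgn R b := by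
  have hale : a ≤ k := sub_le hsa
  obtain ⟨hsc, hdac⟩ := sub_decomp hsa
  have hdk : Dis (m - k) k := dis_of_sub_left hsubd (dis_symm (dis_pow t k hk))
  have hd1 : Dis (k - a) (m - k) := dis_of_sub_left hsc (dis_symm hdk)
  have e1 : Hw m = Hw (m - k) + Hw k := by
    have h := Hw_add_of_dis (m - k) k hdk
    rw [show m - k + k = m from by omega] at h
    exact h
  have e2 : Hw k = Hw a + Hw (k - a) := by
    have h := Hw_add_of_dis a (k - a) hdac
    rw [show a + (k - a) = k from by omega] at h
    exact h
  have e3 : Hw b = Hw (k - a) + Hw (m - k) := by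
    have h := Hw_add_of_dis (k - a) (m - k) hd1
    rw [show k - a + (m - k) = b from by omega] at h
    exact h
  have e4 : Hw m + Hw b = Hw a + 2 * (Hw (k - a) + Hw (m - k)) := by omega
  rw [sgn_eq_hw, sgn_eq_hw, sgn_eq_hw, ← pow_add, e4, pow_add, pow_mul, neg_one_sq,
    one_pow, mul_one]

lemma sgn_mul_self (m : ℕ) : sgn R m * sgn R m = 1 := by
  rw [sgn_eq_hw, ← pow_add, ← two_mul, pow_mul, neg_one_sq, one_pow]

end Aux
/-- For n a power of 2, k < n and f a polynomial,
(S (n-1-k) * x^k) ⊙ (SBar k * f) = σ ⊙ ((S (n-1-k) * x^k) ⊙ (S k * (σ ⊙ f))). -/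
theorem hadamard_sierbar_eq_bar_hadamard_sier (R : Type*) [CommRing R] (n k : ℕ)
    (hn : ∃ t : ℕ, n = 2 ^ t) (hk : k < n) (f : Polynomial R) :
    hadP (Sier R (n - 1 - k) * Polynomial.X ^ k) (SierBar R k * f) =
      barP (hadP (Sier R (n - 1 - k) * Polynomial.X ^ k) (Sier R k * barP f)) := by
  classical
  obtain ⟨t, rfl⟩ := hn
  apply Polynomial.ext
  intro m
  rw [hadP_coeff, barP_coeff, hadP_coeff, Polynomial.coeff_mul_X_pow']
  by_cases hmk : k ≤ m
  · rw [if_pos hmk, sier_coeff]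
    by_cases hd : BSub (m - k) (2 ^ t - 1 - k)
    · rw [if_pos hd, one_mul, one_mul, Polynomial.coeff_mul, Polynomial.coeff_mul,
        Finset.mul_sum]
      apply Finset.sum_congr rfl
      rintro ⟨a, b⟩ hab
      rw [Finset.HasAntidiagonal.mem_antidiagonal] at hab
      rw [sierBar_coeff, sier_coeff, barP_coeff]
      by_cases hsa : BSub a k
      · rw [if_pos hsa, if_pos hsa, one_mul,
          show ((-1 : R) ^ Hw a) = sgn R a from rfl,
          key_sign R t k m a b hk hmk hd hsa hab]
        ring
      · rw [if_neg hsa, if_neg hsa, zero_mul, zero_mul, mul_zero]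
    · rw [if_neg hd, zero_mul, zero_mul, mul_zero]
  · rw [if_neg hmk, zero_mul, zero_mul, mul_zero]
end

section
/- For every k ∈ ℕ, the formal power series identity (1 − x) · S_k · δ_k = 1 holds in R[[x]] over any commutative ring R; that is, δ_k, the power series whose m-th coefficient is 1 if m AND k = 0 and 0 otherwise, is the multiplicative inverse of (1 − x)·S_k. -/
/-- `δ k`: the power series whose `m`-th coefficient is `1` if `m AND k = 0`, else `0`. -/
noncomputable def delta (R : Type*) [CommRing R] (k : ℕ) : PowerSeries R :=
  PowerSeries.mk fun m => if m &&& k = 0 then 1 else 0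

/-- If `a` and `b` have disjoint binary digits, then `a + b = a ^^^ b`. -/
lemma add_eq_xor_of_and_eq_zero : ∀ a b : ℕ, a &&& b = 0 → a + b = a ^^^ b := by
  intro a
  induction a using Nat.strong_induction_on with
  | _ a ih =>
    intro b h
    rcases Nat.eq_zero_or_pos a with rfl | ha
    · simp
    · have h2 : a / 2 &&& b / 2 = 0 := by
        rw [← Nat.and_div_two, h]
      have e1 : (a ^^^ b) / 2 = a / 2 ^^^ b / 2 := Nat.xor_div_two
      have e2 : (a ^^^ b) % 2 = (a + b) % 2 := Nat.xor_mod_two_eq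
      have ih2 := ih (a / 2) (Nat.div_lt_self ha (by norm_num)) (b / 2) h2
      have h0 : a % 2 = 0 ∨ b % 2 = 0 := by
        have hb := Nat.testBit_and a b 0
        rw [h] at hb
        simp only [Nat.zero_testBit, Nat.testBit_eq_decide_div_mod_eq, pow_zero, Nat.div_one] at hb
        rcases Bool.and_eq_false_iff.mp hb.symm with h' | h' <;>
          simp only [decide_eq_false_iff_not] at h' <;> omega
      omega

open scoped Classical in
/-- Disjointness of bits of `n` and bits outside predicate `p`, coefficient computation. -/
lemma coeff_prod_aux (R : Type*) [CommRing R] (p : ℕ → Bool) :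
    ∀ (N : ℕ) (n : ℕ),
    (∏ j ∈ Finset.range N,
        if p j then (1 + Polynomial.X ^ (2 ^ j) : Polynomial R) else 1).coeff n
      = if n < 2 ^ N ∧ ∀ j, n.testBit j = true → p j = true then 1 else 0 := by
  intro N
  induction N with
  | zero =>
    intro n
    simp only [Finset.range_zero, Finset.prod_empty, Polynomial.coeff_one, pow_zero,
      Nat.lt_one_iff]
    rcases eq_or_ne n 0 with rfl | hn
    · simp
    · simp [hn]
  | succ N ih =>
    intro n
    rw [Finset.prod_range_succ]
    by_cases hp : p N
    · rw [if_pos hp, mul_add, mul_one, Polynomial.coeff_add, Polynomial.coeff_mul_X_pow', ih]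
      by_cases h2 : 2 ^ N ≤ n
      · rw [if_pos h2, ih]
        have hfirst : ¬ (n < 2 ^ N ∧ ∀ j, n.testBit j = true → p j = true) := by
          rintro ⟨h', _⟩; omega
        rw [if_neg hfirst, zero_add]
        congr 1
        rw [eq_iff_iff]
        have hpow : (2 : ℕ) ^ (N + 1) = 2 ^ N + 2 ^ N := by ring
        constructor
        · rintro ⟨hlt, hc⟩
          set m := n - 2 ^ N with hm
          have hmN : m.testBit N = false := Nat.testBit_lt_two_pow hlt
          have hd : 2 ^ N &&& m = 0 := by
            apply Nat.eq_of_testBit_eq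
            intro j
            rw [Nat.testBit_and, Nat.testBit_two_pow, Nat.zero_testBit]
            rcases eq_or_ne N j with rfl | hj
            · simp [hmN]
            · simp [hj]
          have hn' : n = 2 ^ N ^^^ m := by
            rw [← add_eq_xor_of_and_eq_zero _ _ hd]; omega
          refine ⟨by omega, ?_⟩
          intro j hj
          rw [hn', Nat.testBit_xor, Nat.testBit_two_pow] at hj
          rcases eq_or_ne N j with rfl | hNj
          · exact hp
          · simp only [hNj, decide_false, Bool.false_xor] at hj
            exact hc j hj
        · rintro ⟨hlt, hc⟩
          have hmlt : n - 2 ^ N < 2 ^ N := by omega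
          set m := n - 2 ^ N with hm
          have hmN : m.testBit N = false := Nat.testBit_lt_two_pow hmlt
          have hd : 2 ^ N &&& m = 0 := by
            apply Nat.eq_of_testBit_eq
            intro j
            rw [Nat.testBit_and, Nat.testBit_two_pow, Nat.zero_testBit]
            rcases eq_or_ne N j with rfl | hj
            · simp [hmN]
            · simp [hj]
          have hn' : n = 2 ^ N ^^^ m := by
            rw [← add_eq_xor_of_and_eq_zero _ _ hd]; omega
          refine ⟨hmlt, ?_⟩
          intro j hj
          apply hc
          rw [hn', Nat.testBit_xor, Nat.testBit_two_pow]
          rcases eq_or_ne N j with rfl | hNj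
          · rw [hmN] at hj; exact absurd hj (by simp)
          · simp [hNj, hj]
      · rw [if_neg h2, add_zero]
        congr 1
        rw [eq_iff_iff]
        have hpow : (2 : ℕ) ^ (N + 1) = 2 ^ N + 2 ^ N := by ring
        constructor
        · rintro ⟨hlt, hc⟩; exact ⟨by omega, hc⟩
        · rintro ⟨hlt, hc⟩; exact ⟨by omega, hc⟩
    · rw [if_neg hp, mul_one, ih]
      congr 1
      rw [eq_iff_iff]
      have hpow : (2 : ℕ) ^ (N + 1) = 2 ^ N + 2 ^ N := by ring
      constructor
      · rintro ⟨hlt, hc⟩; exact ⟨by omega, hc⟩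
      · rintro ⟨hlt, hc⟩
        refine ⟨?_, hc⟩
        by_contra h2
        push_neg at h2
        have hbit : n.testBit N = true := by
          rw [Nat.testBit_eq_decide_div_mod_eq]
          have : n / 2 ^ N = 1 := Nat.div_eq_of_lt_le (by omega) (by omega)
          simp [this]
        exact hp (hc N hbit)
      
lemma coeff_Sier (R : Type*) [CommRing R] (k n : ℕ) :
    (Sier R k).coeff n = if n &&& k = n then 1 else 0 := by
  rw [Sier, coeff_prod_aux R k.testBit (k + 1) n]
  congr 1
  rw [eq_iff_iff]
  constructor
  · rintro ⟨-, hc⟩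
    apply Nat.eq_of_testBit_eq
    intro j
    rw [Nat.testBit_and]
    cases hj : n.testBit j
    · simp
    · simp [hc j hj]
  · intro h
    constructor
    · have h1 : n ≤ k := h ▸ Nat.and_le_right
      have h2 : k < 2 ^ k := Nat.lt_two_pow_self
      have h3 : (2:ℕ) ^ k ≤ 2 ^ (k + 1) := Nat.pow_le_pow_right (by norm_num) (by omega)
      omega
    · intro j hj
      have := Nat.testBit_and n k j
      rw [h, hj, Bool.true_and] at this
      exact this.symm

/-- In R[[x]], (1 - x) * S k * δ k = 1, i.e. δ k is the multiplicative
inverse of the power series (1 - x) * S k. -/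
theorem delta_mul_inv (R : Type*) [CommRing R] (k : ℕ) :
    (1 - PowerSeries.X) * (Sier R k : PowerSeries R) * delta R k = 1 := by
  have key : (Sier R k : PowerSeries R) * delta R k
      = PowerSeries.mk (fun _ => (1 : R)) := by
    ext m
    rw [PowerSeries.coeff_mul, PowerSeries.coeff_mk]
    have hmem : ((m &&& k, m &&& k ^^^ m) : ℕ × ℕ) ∈ Finset.HasAntidiagonal.antidiagonal m := by
      rw [Finset.HasAntidiagonal.mem_antidiagonal]
      have hd : (m &&& k) &&& (m &&& k ^^^ m) = 0 := by
        apply Nat.eq_of_testBit_eq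
        intro j
        rw [Nat.testBit_and, Nat.testBit_xor, Nat.testBit_and, Nat.zero_testBit]
        cases m.testBit j <;> cases k.testBit j <;> rfl
      rw [add_eq_xor_of_and_eq_zero _ _ hd, xor_cancel_left]
    rw [Finset.sum_eq_single_of_mem _ hmem]
    · rw [Polynomial.coeff_coe, coeff_Sier, delta, PowerSeries.coeff_mk]
      rw [if_pos (by rw [Nat.and_assoc, Nat.and_self])]
      rw [if_pos, one_mul]
      apply Nat.eq_of_testBit_eq
      intro j
      rw [Nat.testBit_and, Nat.testBit_xor, Nat.testBit_and, Nat.zero_testBit]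
      cases m.testBit j <;> cases k.testBit j <;> rfl
    · rintro ⟨a, b⟩ hab hne
      rw [Finset.HasAntidiagonal.mem_antidiagonal] at hab
      rw [Polynomial.coeff_coe, coeff_Sier, delta, PowerSeries.coeff_mk]
      by_cases ha : a &&& k = a
      · by_cases hb : b &&& k = 0
        · exfalso
          apply hne
          have hd : a &&& b = 0 := by
            calc a &&& b = (a &&& k) &&& b := by rw [ha]
            _ = a &&& (b &&& k) := by rw [Nat.and_assoc, Nat.and_comm k b]
            _ = a &&& 0 := by rw [hb]
            _ = 0 := by simp
          have hx : a ^^^ b = m := by rw [← add_eq_xor_of_and_eq_zero _ _ hd, hab]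
          have hA : a = m &&& k := by
            rw [← hx, Nat.and_xor_distrib_right, ha, hb, Nat.xor_zero]
          have hB : b = m &&& k ^^^ m := by
            rw [← hA, ← hx, xor_cancel_left]
          rw [Prod.mk.injEq]
          exact ⟨hA, hB⟩
        · rw [if_neg hb, mul_zero]
      · rw [if_neg ha, zero_mul]
  rw [mul_assoc, key]
  ext n
  rw [sub_mul, one_mul, map_sub]
  cases n with
  | zero =>
    simp [PowerSeries.coeff_zero_eq_constantCoeff]
  | succ n =>
    rw [PowerSeries.coeff_succ_X_mul, PowerSeries.coeff_mk, PowerSeries.coeff_mk]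
    simp [PowerSeries.coeff_one]
end

section
/- For every formal power series f over a commutative ring R, the binomial modulo 2 transform and its inverse transform are mutually inverse: (f′)* = f and (f*)′ = f. -/
/-- The binomial modulo 2 transform: `f'[n] = Σ_{0≤k≤n, (n-k) AND k = 0} f[k]`. -/
noncomputable def bmt {R : Type*} [CommRing R] (f : PowerSeries R) : PowerSeries R :=
  PowerSeries.mk fun n => ∑ k ∈ Finset.range (n + 1),
    if (n - k) &&& k = 0 then PowerSeries.coeff k f else 0

/-- The inverse binomial modulo 2 transform:
`f*[n] = Σ_{0≤k≤n, (n-k) AND k = 0} σ_{n-k}·f[k]`. -/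
noncomputable def bmtInv {R : Type*} [CommRing R] (f : PowerSeries R) : PowerSeries R :=
  PowerSeries.mk fun n => ∑ k ∈ Finset.range (n + 1),
    if (n - k) &&& k = 0 then sgn R (n - k) * PowerSeries.coeff k f else 0

namespace BmtAux

lemma testBit_and_zero {a b : ℕ} (h : a &&& b = 0) (i : ℕ) :
    ¬(a.testBit i = true ∧ b.testBit i = true) := by
  rintro ⟨h1, h2⟩
  have := congrArg (fun x => Nat.testBit x i) h
  simp [Nat.testBit_and, h1, h2] at this

lemma and_eq_zero_of_testBit {a b : ℕ}
    (h : ∀ i, ¬(a.testBit i = true ∧ b.testBit i = true)) : a &&& b = 0 := by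
  apply Nat.eq_of_testBit_eq
  intro i
  have := h i
  rcases ha : a.testBit i <;> rcases hb : b.testBit i <;> simp_all [Nat.testBit_and]

lemma add_eq_xor : ∀ a b : ℕ, a &&& b = 0 → a + b = a ^^^ b := by
  intro a
  induction a using Nat.strong_induction_on with
  | _ a ih =>
    intro b h
    rcases Nat.eq_zero_or_pos a with rfl | ha
    · simp
    have h2 : a / 2 &&& b / 2 = 0 := by rw [← Nat.and_div_two, h]
    have hih := ih (a / 2) (Nat.div_lt_self ha one_lt_two) (b / 2) h2
    have hm : ¬(a % 2 = 1 ∧ b % 2 = 1) := by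
      rintro ⟨h1, h2'⟩
      have h3 := Nat.and_mod_two_eq_one.mpr ⟨h1, h2'⟩
      rw [h] at h3
      exact absurd h3 (by norm_num)
    have hx2 := Nat.xor_div_two (a := a) (b := b)
    have hx1 := Nat.xor_mod_two_eq_one (a := a) (b := b)
    have e1 := Nat.div_add_mod a 2
    have e2 := Nat.div_add_mod b 2
    have e3 := Nat.div_add_mod (a ^^^ b) 2
    omega

/-- `s` is a bitwise submask of `t`. -/
def IsSub (s t : ℕ) : Prop := ∀ i, s.testBit i = true → t.testBit i = true

lemma of_submask {s t : ℕ} (h : IsSub s t) :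
    s ≤ t ∧ (t - s) &&& s = 0 ∧ t - s = t ^^^ s := by
  have hd : s &&& (t ^^^ s) = 0 := by
    apply and_eq_zero_of_testBit
    rintro i ⟨h1, h2⟩
    simp [Nat.testBit_xor, h1, h i h1] at h2
  have hadd : s + (t ^^^ s) = t := by
    rw [add_eq_xor _ _ hd]
    conv_lhs => rw [Nat.xor_comm t s]
    rw [Nat.xor_xor_cancel_left]
  have hsub : t - s = t ^^^ s := by omega
  refine ⟨by omega, ?_, hsub⟩
  rw [hsub, Nat.land_comm]
  exact hd

lemma to_submask {s t : ℕ} (hle : s ≤ t) (h0 : (t - s) &&& s = 0) : IsSub s t := by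
  have h1 : (t - s) + s = (t - s) ^^^ s := add_eq_xor _ _ h0
  have h2 : t = (t - s) ^^^ s := by omega
  intro i hi
  have h3 := congrArg (fun x => Nat.testBit x i) h2
  have h4 := testBit_and_zero h0 i
  simp only [Nat.testBit_xor] at h3
  rcases hts : (t - s).testBit i with hts | hts
  · rw [hts, hi] at h3; simpa using h3
  · exact absurd ⟨hts, hi⟩ h4

lemma sub_eq_xor {s t : ℕ} (hle : s ≤ t) (h0 : (t - s) &&& s = 0) : t - s = t ^^^ s :=
  (of_submask (to_submask hle h0)).2.2

variable {R : Type*} [CommRing R]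

lemma sgn_zero : sgn R 0 = 1 := by simp [sgn]

lemma sgn_rec (n : ℕ) : sgn R n = (-1) ^ (n % 2) * sgn R (n / 2) := by
  rcases Nat.eq_zero_or_pos n with rfl | hn
  · simp [sgn]
  · rw [sgn, Nat.digits_def' (by norm_num : 1 < 2) hn]
    simp [sgn, pow_add]

lemma neg_one_pow_mod_two (x : ℕ) : ((-1 : R)) ^ (x % 2) = (-1) ^ x := by
  conv_rhs => rw [← Nat.div_add_mod x 2]
  rw [pow_add, pow_mul]
  simp

lemma sgn_xor : ∀ a b : ℕ, sgn R (a ^^^ b) = sgn R a * sgn R b := by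
  intro a
  induction a using Nat.strong_induction_on with
  | _ a ih =>
    intro b
    rcases Nat.eq_zero_or_pos a with rfl | ha
    · simp [Nat.zero_xor, sgn_zero]
    rw [sgn_rec (a ^^^ b), Nat.xor_div_two, ih (a / 2) (Nat.div_lt_self ha one_lt_two) (b / 2),
      sgn_rec a, sgn_rec b]
    have hmod : (a ^^^ b) % 2 = (a + b) % 2 := Nat.xor_mod_two_eq
    rw [hmod, neg_one_pow_mod_two, neg_one_pow_mod_two, neg_one_pow_mod_two, pow_add]
    ring

lemma sgn_two_pow (i : ℕ) : sgn R (2 ^ i) = -1 := by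
  induction i with
  | zero => simp [sgn]
  | succ i ih =>
    rw [sgn_rec]
    have h1 : 2 ^ (i + 1) % 2 = 0 := by
      simp [pow_succ, Nat.mul_mod_left]
    have h2 : 2 ^ (i + 1) / 2 = 2 ^ i := by
      rw [pow_succ, Nat.mul_div_cancel _ (by norm_num)]
    rw [h1, h2, ih, pow_zero, one_mul]

/-- The finset of submasks of `t`. -/
def A (t : ℕ) : Finset ℕ := (Finset.range (t + 1)).filter (fun s => (t - s) &&& s = 0)

lemma mem_A {t s : ℕ} : s ∈ A t ↔ s ≤ t ∧ (t - s) &&& s = 0 := by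
  simp [A, Nat.lt_succ_iff]

lemma mem_A_of_submask {t s : ℕ} (h : IsSub s t) : s ∈ A t := by
  have := of_submask h
  exact mem_A.mpr ⟨this.1, this.2.1⟩

lemma submask_of_mem_A {t s : ℕ} (h : s ∈ A t) : IsSub s t := by
  rw [mem_A] at h
  exact to_submask h.1 h.2

lemma xor_two_pow_mem_A {t s i : ℕ} (hi : t.testBit i = true) (hs : s ∈ A t) :
    s ^^^ 2 ^ i ∈ A t := by
  apply mem_A_of_submask
  intro j hj
  rw [Nat.testBit_xor, Nat.testBit_two_pow] at hj
  by_cases hij : i = j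
  · subst hij; exact hi
  · have := submask_of_mem_A hs j
    simp [hij] at hj
    exact this hj

lemma key_sum {t : ℕ} (ht : t ≠ 0) (V : ℕ → R) {i : ℕ} (hi : t.testBit i = true)
    (hV : ∀ s ∈ A t, V (s ^^^ 2 ^ i) = -V s) :
    ∑ s ∈ A t, V s = 0 := by
  refine Finset.sum_involution (fun s _ => s ^^^ 2 ^ i) ?_ ?_
    (fun s hs => xor_two_pow_mem_A hi hs) ?_
  · intro s hs
    rw [hV s hs]; ring
  · intro s hs _
    intro hcon
    have h2 : s ^^^ 2 ^ i = s ^^^ 0 := by simpa using hcon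
    have := Nat.xor_right_injective h2
    exact absurd this.symm (by positivity)
  · intro s hs
    exact Nat.xor_xor_cancel_right _ _

lemma exists_testBit {t : ℕ} (ht : t ≠ 0) : ∃ i, t.testBit i = true := by
  by_contra h
  push_neg at h
  exact ht (Nat.eq_of_testBit_eq fun i => by simpa using h i)

lemma A_zero : A 0 = {0} := by decide

lemma keyB (t : ℕ) : (∑ s ∈ A t, sgn R s) = if t = 0 then 1 else 0 := by
  rcases Nat.eq_zero_or_pos t with rfl | ht
  · simp [A_zero, sgn_zero]
  · rw [if_neg (by omega)]
    obtain ⟨i, hi⟩ := exists_testBit (by omega : t ≠ 0)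
    refine key_sum (by omega) _ hi (fun s hs => ?_)
    rw [sgn_xor, sgn_two_pow]
    ring

lemma keyA (t : ℕ) : (∑ s ∈ A t, sgn R (t - s)) = if t = 0 then 1 else 0 := by
  rcases Nat.eq_zero_or_pos t with rfl | ht
  · simp [A_zero, sgn_zero]
  · rw [if_neg (by omega)]
    obtain ⟨i, hi⟩ := exists_testBit (by omega : t ≠ 0)
    refine key_sum (by omega) _ hi (fun s hs => ?_)
    have h1 := mem_A.mp hs
    have h2 := mem_A.mp (xor_two_pow_mem_A hi hs)
    rw [sub_eq_xor h1.1 h1.2, sub_eq_xor h2.1 h2.2, sgn_xor, sgn_xor, sgn_xor, sgn_two_pow]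
    ring

/-- Generic inner-sum evaluation via the submask bijection. -/
lemma weight (W : ℕ → ℕ → R)
    (hW : ∀ t, (∑ s ∈ A t, W t s) = if t = 0 then 1 else 0)
    (g : ℕ → ℕ → ℕ → R)
    (hcompat : ∀ n m k, k ≤ m → m ≤ n → g n m k = W (n - k) (m - k))
    (n k : ℕ) (hk : k ≤ n) :
    (∑ m ∈ Finset.range (n + 1),
      if k ≤ m ∧ (n - m) &&& m = 0 ∧ (m - k) &&& k = 0 then g n m k else 0)
      = if k = n then 1 else 0 := by
  classical
  rw [← Finset.sum_filter]
  set M := (Finset.range (n + 1)).filter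
      (fun m => k ≤ m ∧ (n - m) &&& m = 0 ∧ (m - k) &&& k = 0) with hM
  have memM : ∀ m, m ∈ M ↔ m ≤ n ∧ k ≤ m ∧ (n - m) &&& m = 0 ∧ (m - k) &&& k = 0 := by
    intro m; simp [hM, Nat.lt_succ_iff, and_assoc]
  by_cases hsub : (n - k) &&& k = 0
  · -- k is a submask of n
    set t := n - k with htdef
    have hkn : IsSub k n := to_submask hk hsub
    have hbij : (∑ m ∈ M, g n m k) = ∑ s ∈ A t, W t s := by
      refine Finset.sum_nbij' (fun m => m - k) (fun s => s + k) ?_ ?_ ?_ ?_ ?_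
      · -- maps M → A t
        intro m hm
        rw [memM] at hm
        obtain ⟨hmn, hkm, h1, h2⟩ := hm
        rw [mem_A]
        refine ⟨by omega, ?_⟩
        have he : t - (m - k) = n - m := by omega
        rw [he]
        apply and_eq_zero_of_testBit
        rintro j ⟨hj1, hj2⟩
        rw [sub_eq_xor hkm h2, Nat.testBit_xor] at hj2
        have hkm' := to_submask hkm h2 j
        have hnm := testBit_and_zero h1 j
        rcases hmj : m.testBit j with hmj | hmj <;>
          rcases hkj : k.testBit j with hkj | hkj <;> simp_all
      · -- maps A t → M
        intro s hs
        rw [mem_A] at hs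
        obtain ⟨hst, h1⟩ := hs
        have hsn : IsSub s t := to_submask hst h1
        have hsk : s &&& k = 0 := by
          apply and_eq_zero_of_testBit
          rintro j ⟨hj1, hj2⟩
          have h3 := hsn j hj1
          exact testBit_and_zero hsub j ⟨by simpa [htdef] using h3, hj2⟩
        rw [memM]
        refine ⟨by omega, by omega, ?_, by simpa using hsk⟩
        have he : n - (s + k) = t - s := by omega
        rw [he, sub_eq_xor hst h1]
        have hsum : s + k = s ^^^ k := add_eq_xor _ _ hsk
        rw [hsum]
        apply and_eq_zero_of_testBit
        rintro j ⟨hj1, hj2⟩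
        rw [Nat.testBit_xor] at hj1 hj2
        have h4 := fun hsj => hsn j hsj
        have h5 := testBit_and_zero hsub j
        have h6 := testBit_and_zero hsk j
        rcases htj : t.testBit j with htj | htj <;>
          rcases hsj : s.testBit j with hsj | hsj <;>
          rcases hkj : k.testBit j with hkj | hkj <;> simp_all
      · intro m hm
        rw [memM] at hm
        omega
      · intro s hs
        omega
      · intro m hm
        rw [memM] at hm
        exact hcompat n m k hm.2.1 hm.1
    rw [hbij, hW]
    exact if_congr (by omega) rfl rfl
  · have hkn : k ≠ n := by
      rintro rfl
      exact hsub (by simp)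
    rw [if_neg hkn]
    apply Finset.sum_eq_zero
    intro m hm
    rw [memM] at hm
    exact absurd ((of_submask (fun j hj =>
      to_submask hm.1 hm.2.2.1 j (to_submask hm.2.1 hm.2.2.2 j hj))).2.1) hsub

lemma main_aux (g : ℕ → ℕ → ℕ → R)
    (hg : ∀ n k, k ≤ n →
      (∑ m ∈ Finset.range (n + 1),
        if k ≤ m ∧ (n - m) &&& m = 0 ∧ (m - k) &&& k = 0 then g n m k else 0)
        = if k = n then 1 else 0)
    (f : PowerSeries R) (n : ℕ) :
    (∑ m ∈ Finset.range (n + 1), if (n - m) &&& m = 0 then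
      (∑ k ∈ Finset.range (m + 1), if (m - k) &&& k = 0 then
        g n m k * PowerSeries.coeff k f else 0) else 0)
      = PowerSeries.coeff n f := by
  classical
  have step1 : (∑ m ∈ Finset.range (n + 1), if (n - m) &&& m = 0 then
      (∑ k ∈ Finset.range (m + 1), if (m - k) &&& k = 0 then
        g n m k * PowerSeries.coeff k f else 0) else 0)
      = ∑ m ∈ Finset.range (n + 1), ∑ k ∈ Finset.range (n + 1),
        (if k ≤ m ∧ (n - m) &&& m = 0 ∧ (m - k) &&& k = 0 then
          g n m k * PowerSeries.coeff k f else 0) := by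
    refine Finset.sum_congr rfl fun m hm => ?_
    have hmn : m ≤ n := by
      simp only [Finset.mem_range, Nat.lt_succ_iff] at hm
      exact hm
    rw [← Finset.sum_subset (Finset.range_subset_range.mpr (by omega) :
        Finset.range (m + 1) ⊆ Finset.range (n + 1))
        (fun k _ hk2 => by
          rw [if_neg]
          simp only [Finset.mem_range, Nat.lt_succ_iff] at hk2
          intro hcon
          exact hk2 (by omega))]
    split_ifs with h
    · refine Finset.sum_congr rfl fun k hk => ?_
      have hkm : k ≤ m := by
        simp only [Finset.mem_range, Nat.lt_succ_iff] at hk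
        exact hk
      by_cases h2 : (m - k) &&& k = 0 <;> simp [h, h2, hkm]
    · symm
      apply Finset.sum_eq_zero
      intro k _
      rw [if_neg]
      tauto
  rw [step1, Finset.sum_comm]
  have step2 : ∀ k ∈ Finset.range (n + 1),
      (∑ m ∈ Finset.range (n + 1),
        if k ≤ m ∧ (n - m) &&& m = 0 ∧ (m - k) &&& k = 0 then
          g n m k * PowerSeries.coeff k f else 0)
      = (if k = n then 1 else 0) * PowerSeries.coeff k f := by
    intro k hk
    have hkn : k ≤ n := by
      simp only [Finset.mem_range, Nat.lt_succ_iff] at hk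
      exact hk
    rw [← hg n k hkn, Finset.sum_mul]
    refine Finset.sum_congr rfl fun m _ => ?_
    split_ifs <;> simp
  rw [Finset.sum_congr rfl step2]
  simp

lemma part1 (f : PowerSeries R) : bmtInv (bmt f) = f := by
  ext n
  rw [bmtInv, PowerSeries.coeff_mk]
  simp only [bmt, PowerSeries.coeff_mk, Finset.mul_sum, mul_ite, mul_zero]
  exact main_aux (fun n m k => sgn R (n - m))
    (weight (fun t s => sgn R (t - s)) keyA _
      (fun n m k hkm hmn => by congr 1; omega)) f n

lemma part2 (f : PowerSeries R) : bmt (bmtInv f) = f := by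
  ext n
  rw [bmt, PowerSeries.coeff_mk]
  simp only [bmtInv, PowerSeries.coeff_mk]
  exact main_aux (fun n m k => sgn R (m - k))
    (weight (fun t s => sgn R s) keyB _
      (fun n m k hkm hmn => rfl)) f n

end BmtAux

/-- The binomial modulo 2 transform and its inverse are mutually inverse:
(f')* = f and (f*)' = f. -/
theorem bmt_bmtInv_inverse (R : Type*) [CommRing R] (f : PowerSeries R) :
    bmtInv (bmt f) = f ∧ bmt (bmtInv f) = f :=
  ⟨BmtAux.part1 f, BmtAux.part2 f⟩
end
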